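/- Every unit interval graph admits a conflict-free 2-coloring. That is, if V is a finite set and x : V → ℝ, then the simple graph on V in which distinct u, v are adjacent if and only if |x(u) − x(v)| ≤ 2 admits a conflict-free 2-coloring. -/

import Mathlib

/-- A conflict-free coloring of `G` with `k` colors: a partial coloring
(uncolored vertices get `none`) such that every vertex has, in its closed
neighborhood, a colored vertex whose color occurs exactly once there. -/
def IsCFColoring {V : Type*} (G : SimpleGraph V) {k : ℕ} (χ : V → Option (Fin k)) : Prop :=
  ∀ v : V, ∃ u ∈ insert v (G.neighborSet v), (χ u).isSome ∧
    ∀ w ∈ insert v (G.neighborSet v), χ w = χ u → w = u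

/-- `G` admits a conflict-free coloring with `k` colors. -/
def HasCFColoring {V : Type*} (G : SimpleGraph V) (k : ℕ) : Prop :=
  ∃ χ : V → Option (Fin k), IsCFColoring G χ

/-- The unit interval graph on points `x`: distinct vertices are adjacent iff
their points are at distance at most 2 (the closed intervals of length 2
centered at the points intersect). -/
def unitIntervalGraph {V : Type*} (x : V → ℝ) : SimpleGraph V where
  Adj u v := u ≠ v ∧ |x u - x v| ≤ 2
  symm := by
    constructor
    intro u v ⟨h1, h2⟩
    exact ⟨h1.symm, by rwa [abs_sub_comm]⟩
  loopless := by
    constructor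
    intro v ⟨h1, _⟩
    exact h1 rfl



noncomputable def greedy : List ℝ → List ℝ
  | [] => []
  | a :: l => a :: greedy (l.filter fun b => a + 2 < b)
  termination_by l => l.length
  decreasing_by simpa using Nat.lt_succ_of_le ((List.length_filter_le _ l.attach).trans_eq List.length_attach)

lemma greedy_subset : ∀ l : List ℝ, ∀ b ∈ greedy l, b ∈ l := by
  intro l
  induction l using greedy.induct with
  | case1 => simp [greedy]
  | case2 a l ih =>
    simp only [List.unattach_filter, List.unattach_attach] at ih
    rw [List.unattach_filter (g := fun b => decide (a + 2 < b)) (hf := fun _ _ => rfl), List.unattach_attach] at ih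
    intro b hb
    rw [greedy] at hb
    rcases List.mem_cons.1 hb with rfl | hb
    · simp
    · exact List.mem_cons_of_mem _ (List.mem_of_mem_filter (ih b hb))

lemma greedy_pairwise : ∀ l : List ℝ, (greedy l).Pairwise (fun a b => a + 2 < b) := by
  intro l
  induction l using greedy.induct with
  | case1 => simp [greedy]
  | case2 a l ih =>
    simp only [List.unattach_filter, List.unattach_attach] at ih
    rw [List.unattach_filter (g := fun b => decide (a + 2 < b)) (hf := fun _ _ => rfl), List.unattach_attach] at ih
    rw [greedy]
    refine List.pairwise_cons.2 ⟨?_, ih⟩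
    intro b hb
    have := (List.mem_filter.1 (greedy_subset _ b hb)).2
    simpa using this

lemma greedy_cover : ∀ l : List ℝ, l.Pairwise (· ≤ ·) → ∀ b ∈ l, ∃ c ∈ greedy l, c ≤ b ∧ b ≤ c + 2 := by
  intro l
  induction l using greedy.induct with
  | case1 => simp
  | case2 a l ih =>
    simp only [List.unattach_filter, List.unattach_attach] at ih
    rw [List.unattach_filter (g := fun b => decide (a + 2 < b)) (hf := fun _ _ => rfl), List.unattach_attach] at ih
    intro hs b hb
    rw [greedy]
    rcases List.mem_cons.1 hb with h' | hb
    · exact ⟨a, by simp, le_of_eq h'.symm, by rw [h']; linarith⟩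
    · by_cases h : a + 2 < b
      · obtain ⟨c, hc, h1, h2⟩ := ih (((List.pairwise_cons.1 hs).2.sublist List.filter_sublist)) b
          (List.mem_filter.2 ⟨hb, by simpa using h⟩)
        exact ⟨c, List.mem_cons_of_mem _ hc, h1, h2⟩
      · have : a ≤ b := (List.pairwise_cons.1 hs).1 b hb
        exact ⟨a, by simp, this, by linarith⟩

lemma gap_lemma {G : List ℝ} (hG : G.Pairwise (fun a b => a + 2 < b)) :
    ∀ {a b : ℝ}, a ∈ G → b ∈ G → a ≠ b →
    G.idxOf a % 2 = G.idxOf b % 2 → a + 4 < b ∨ b + 4 < a := by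
  have key : ∀ {a b : ℝ}, a ∈ G → b ∈ G → G.idxOf a + 2 ≤ G.idxOf b → a + 4 < b := by
    intro a b ha hb hij
    have hia : G.idxOf a < G.length := List.idxOf_lt_length_iff.2 ha
    have hib : G.idxOf b < G.length := List.idxOf_lt_length_iff.2 hb
    have hP := List.pairwise_iff_get.1 hG
    have h1 : a + 2 < G.get ⟨G.idxOf a + 1, by omega⟩ := by
      have := hP ⟨G.idxOf a, hia⟩ ⟨G.idxOf a + 1, by omega⟩ (by simp)
      rwa [List.idxOf_get hia] at this
    have h2 : G.get ⟨G.idxOf a + 1, by omega⟩ + 2 < b := by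
      have := hP ⟨G.idxOf a + 1, by omega⟩ ⟨G.idxOf b, hib⟩ (by simp; omega)
      rwa [List.idxOf_get hib] at this
    linarith
  intro a b ha hb hne hpar
  have hidx : G.idxOf a ≠ G.idxOf b := by
    intro h
    have hia : G.idxOf a < G.length := List.idxOf_lt_length_iff.2 ha
    have hib : G.idxOf b < G.length := List.idxOf_lt_length_iff.2 hb
    exact hne (by rw [← List.idxOf_get hia, ← List.idxOf_get hib]; congr 1; exact Fin.ext h)
  rcases lt_or_gt_of_ne hidx with h | h
  · exact Or.inl (key ha hb (by omega))
  · exact Or.inr (key hb ha (by omega))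

noncomputable def pick {V : Type*} (x : V → ℝ) (v : V) : V :=
  (⟨v, rfl⟩ : ∃ w, x w = x v).choose

lemma pick_spec {V : Type*} (x : V → ℝ) (v : V) : x (pick x v) = x v :=
  Exists.choose_spec (⟨v, rfl⟩ : ∃ w, x w = x v)

lemma pick_eq_of_eq {V : Type*} (x : V → ℝ) {v w : V} (h : x v = x w) :
    pick x v = pick x w := by
  unfold pick
  congr 1
  rw [h]

lemma pick_idem {V : Type*} (x : V → ℝ) (v : V) : pick x (pick x v) = pick x v :=
  pick_eq_of_eq x (pick_spec x v)

theorem stmt13 {V : Type*} [Fintype V] (x : V → ℝ) :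
    HasCFColoring (unitIntervalGraph x) 2 := by
  classical
  set L := (Finset.image x Finset.univ).sort (· ≤ ·) with hL
  set G := greedy L with hGdef
  have hGpw : G.Pairwise (fun a b => a + 2 < b) := greedy_pairwise L
  refine ⟨fun v => if h : x v ∈ G ∧ pick x v = v then
      some ⟨G.idxOf (x v) % 2, Nat.mod_lt _ two_pos⟩ else none, ?_⟩
  intro v
  have hxvL : x v ∈ L := by
    rw [hL, Finset.mem_sort]
    exact Finset.mem_image_of_mem x (Finset.mem_univ v)
  obtain ⟨c, hcG, hc1, hc2⟩ := greedy_cover L (Finset.pairwise_sort _ _) (x v) hxvL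
  have hcL : c ∈ L := greedy_subset L c hcG
  have hex : ∃ w, x w = c := by
    rw [hL, Finset.mem_sort, Finset.mem_image] at hcL
    obtain ⟨w, _, hw⟩ := hcL; exact ⟨w, hw⟩
  obtain ⟨w0, hw0⟩ := hex
  have hxu : x (pick x w0) = c := (pick_spec x w0).trans hw0
  set u := pick x w0 with hu
  have hpu : pick x u = u := pick_idem x w0
  have hucond : x u ∈ G ∧ pick x u = u := ⟨hxu ▸ hcG, hpu⟩
  have habs : |x v - x u| ≤ 2 := by
    rw [hxu]; rw [abs_le]; constructor <;> linarith
  refine ⟨u, ?_, ?_, ?_⟩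
  · by_cases huv : u = v
    · rw [huv]; exact Set.mem_insert _ _
    · exact Set.mem_insert_of_mem _ ⟨fun h => huv h.symm, habs⟩
  · simp only [dif_pos hucond, Option.isSome_some]
  · intro w hw hχ
    dsimp only at hχ
    by_cases hwcond : x w ∈ G ∧ pick x w = w
    · rw [dif_pos hwcond, dif_pos hucond] at hχ
      have hpar : G.idxOf (x w) % 2 = G.idxOf (x u) % 2 := by
        exact congrArg Fin.val (Option.some_injective _ hχ)
      have hwv : |x w - x v| ≤ 2 := by
        rcases hw with h' | h'
        · rw [h']; simp
        · have := h'.2; rwa [abs_sub_comm] at this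
      have hxwu : x w = x u := by
        by_contra hne
        rcases gap_lemma hGpw hwcond.1 hucond.1 hne hpar with h | h <;>
        · rw [abs_le] at habs hwv; linarith
      rw [← hwcond.2, ← hpu]
      exact pick_eq_of_eq x hxwu
    · rw [dif_neg hwcond, dif_pos hucond] at hχ
      simp at hχ
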